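/- Let U be a nonempty compact metric space and F : [t, T] × ℝ × U → ℝ continuous, Lipschitz in the second variable uniformly in (s, a). For a measurable control u : [t, T] → U, let Y^u denote the solution of the backward ODE (Y^u)'(s) = −F(s, Y^u(s), u(s)) with Y^u(T) = 0, and let Y⁰ solve (Y⁰)'(s) = −F₀(s, Y⁰(s)) with Y⁰(T) = 0, where F₀(s, y) = inf_{a∈U} F(s, y, a). Then inf over all measurable controls u of Y^u(t) equals Y⁰(t). -/

import Mathlib

open Set Filter Topology



theorem aux_comp (t T : ℝ) (htT : t ≤ T) (L : ℝ) (g gd : ℝ → ℝ)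
    (hg : ∀ s ∈ Set.Icc t T, HasDerivAt g (gd s) s)
    (hgd : ∀ s ∈ Set.Icc t T, gd s ≤ L * |g s|)
    (hgT : g T = 0) : 0 ≤ g t := by
  by_contra h
  push_neg at h
  have hgc : ContinuousOn g (Icc t T) :=
    fun s hs => ((hg s hs).continuousAt).continuousWithinAt
  set A : Set ℝ := Icc t T ∩ g ⁻¹' {0} with hA
  have hTA : T ∈ A := ⟨⟨htT, le_refl T⟩, by simpa using hgT⟩
  have hAne : A.Nonempty := ⟨T, hTA⟩
  have hAbdd : BddBelow A := ⟨t, fun x hx => hx.1.1⟩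
  have hAclosed : IsClosed A :=
    hgc.preimage_isClosed_of_isClosed isClosed_Icc isClosed_singleton
  set s1 := sInf A with hs1
  have hs1A : s1 ∈ A := hAclosed.csInf_mem hAne hAbdd
  have hts1 : t ≤ s1 := le_csInf hAne (fun x hx => hx.1.1)
  have hs1T : s1 ≤ T := hs1A.1.2
  have hgs1 : g s1 = 0 := hs1A.2
  have hts1' : t < s1 := by
    rcases eq_or_lt_of_le hts1 with heq | hlt
    · exact absurd (heq ▸ hgs1) (ne_of_lt h)
    · exact hlt
  -- g < 0 on [t, s1)
  have hneg : ∀ s ∈ Ico t s1, g s < 0 := by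
    intro s hs
    by_contra hpos
    push_neg at hpos
    have hsT : s ≤ T := le_trans (le_of_lt hs.2) hs1T
    have hsub : Icc t s ⊆ Icc t T := Icc_subset_Icc (le_refl t) hsT
    obtain ⟨c, hc, hgc0⟩ := intermediate_value_Icc hs.1 (hgc.mono hsub)
      (show (0:ℝ) ∈ Icc (g t) (g s) from ⟨le_of_lt h, hpos⟩)
    have hcA : c ∈ A := ⟨⟨hc.1, le_trans hc.2 hsT⟩, by simpa using hgc0⟩
    have : s1 ≤ c := csInf_le hAbdd hcA
    exact absurd (lt_of_le_of_lt (this.trans hc.2) hs.2) (lt_irrefl s1)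
  -- φ = g * exp (L s) is antitone on [t, s1]
  set φ : ℝ → ℝ := fun s => g s * Real.exp (L * s) with hφ
  have hφd : ∀ s ∈ Icc t T,
      HasDerivAt φ (gd s * Real.exp (L * s) + g s * (Real.exp (L * s) * L)) s := by
    intro s hs
    have h1 : HasDerivAt (fun x : ℝ => L * x) L s := by
      simpa using (hasDerivAt_id s).const_mul L
    have h2 : HasDerivAt (fun x : ℝ => Real.exp (L * x)) (Real.exp (L * s) * L) s :=
      (Real.hasDerivAt_exp (L * s)).comp s h1
    exact (hg s hs).mul h2
  have hsub1 : Icc t s1 ⊆ Icc t T := Icc_subset_Icc (le_refl t) hs1T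
  have hanti : AntitoneOn φ (Icc t s1) := by
    apply antitoneOn_of_deriv_nonpos (convex_Icc t s1)
    · exact (hgc.mono hsub1).mul (Real.continuous_exp.comp (continuous_const.mul continuous_id)).continuousOn
    · intro s hs
      rw [interior_Icc] at hs
      have hsIcc : s ∈ Icc t T := hsub1 ⟨le_of_lt hs.1, le_of_lt hs.2⟩
      exact (hφd s hsIcc).differentiableAt.differentiableWithinAt
    · intro s hs
      rw [interior_Icc] at hs
      have hsIcc : s ∈ Icc t T := hsub1 ⟨le_of_lt hs.1, le_of_lt hs.2⟩
      rw [(hφd s hsIcc).deriv]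
      have hgneg : g s < 0 := hneg s ⟨le_of_lt hs.1, hs.2⟩
      have habs : |g s| = -g s := abs_of_neg hgneg
      have h1 : gd s ≤ -(L * g s) := by
        have := hgd s hsIcc
        rw [habs] at this
        linarith [this]
      have hexp : (0:ℝ) < Real.exp (L * s) := Real.exp_pos _
      nlinarith [hexp, h1]
  have h1 : φ s1 ≤ φ t :=
    hanti ⟨le_refl t, le_of_lt hts1'⟩ ⟨le_of_lt hts1', le_refl s1⟩ (le_of_lt hts1')
  have h2 : φ s1 = 0 := by simp [hφ, hgs1]
  have h3 : φ t < 0 := mul_neg_of_neg_of_pos h (Real.exp_pos _)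
  linarith


theorem aux_sel {U : Type*} [MetricSpace U] [CompactSpace U] [Nonempty U]
    [MeasurableSpace U] [BorelSpace U]
    (g : ℝ → U → ℝ) (hg : Continuous fun p : ℝ × U => g p.1 p.2) :
    ∃ u : ℝ → U, Measurable u ∧ ∀ s, g s (u s) = ⨅ b : U, g s b := by
  classical
  obtain ⟨a, ha⟩ := TopologicalSpace.exists_dense_seq U
  have hgs : ∀ s, Continuous (g s) := fun s =>
    hg.comp (continuous_const.prodMk continuous_id)
  have hga : ∀ b : U, Continuous (fun s => g s b) := fun b =>
    hg.comp (continuous_id.prodMk continuous_const)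
  -- minimum is attained
  have hattain : ∀ s, ∃ y : U, ∀ b, g s y ≤ g s b := by
    intro s
    obtain ⟨y, -, hy⟩ := isCompact_univ.exists_isMinOn univ_nonempty
      (hgs s).continuousOn
    exact ⟨y, fun b => hy (mem_univ b)⟩
  set m : ℝ → ℝ := fun s => ⨅ n : ℕ, g s (a n) with hm
  have hbdd : ∀ s (y : U), (∀ b, g s y ≤ g s b) →
      BddBelow (Set.range fun n : ℕ => g s (a n)) := by
    rintro s y hy
    exact ⟨g s y, by rintro _ ⟨n, rfl⟩; exact hy (a n)⟩
  -- m s equals the attained minimum value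
  have hmattain : ∀ s, ∃ y : U, (∀ b, g s y ≤ g s b) ∧ m s = g s y := by
    intro s
    obtain ⟨y, hy⟩ := hattain s
    refine ⟨y, hy, le_antisymm ?_ (le_ciInf fun n => hy (a n))⟩
    refine le_of_forall_pos_le_add fun ε hε => ?_
    obtain ⟨δ, hδ, hcont⟩ := Metric.continuousAt_iff.1 (hgs s).continuousAt ε hε
    obtain ⟨n, hn⟩ := ha.exists_dist_lt y hδ
    have h1 : m s ≤ g s (a n) := ciInf_le (hbdd s y hy) n
    have h2 : dist (g s (a n)) (g s y) < ε := hcont (by rwa [dist_comm] at hn)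
    rw [Real.dist_eq, abs_lt] at h2
    linarith
  have hmlb : ∀ s (b : U), m s ≤ g s b := by
    intro s b
    obtain ⟨y, hy, hmy⟩ := hmattain s
    exact hmy ▸ hy b
  have hinfU : ∀ s, (⨅ b : U, g s b) = m s := by
    intro s
    obtain ⟨y, hy, hmy⟩ := hmattain s
    refine le_antisymm ?_ (le_ciInf fun b => hmlb s b)
    calc (⨅ b : U, g s b) ≤ g s y :=
          ciInf_le ⟨g s y, by rintro _ ⟨b, rfl⟩; exact hy b⟩ y
      _ = m s := hmy.symm
  have hmmeas : Measurable m := Measurable.iInf fun n => (hga (a n)).measurable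
  -- the approximate argmin predicate
  set Q : ℝ → ℕ → ℝ → Prop := fun s n r =>
    (⨅ k : {k : ℕ // dist (a k) (a n) < r}, g s (a k.1)) ≤ m s with hQ
  have hQmeas : ∀ (n : ℕ) (r : ℝ), MeasurableSet {s | Q s n r} :=
    fun n r => measurableSet_le
      (Measurable.iInf fun k => (hga (a k.1)).measurable) hmmeas
  -- (A) existence of a good minimizer nearby implies Q
  have hQA : ∀ (s : ℝ) (n : ℕ) (r : ℝ) (y : U), (∀ b, g s y ≤ g s b) →
      dist (a n) y < r → Q s n r := by
    intro s n r y hy hnear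
    refine le_of_forall_pos_le_add fun ε hε => ?_
    obtain ⟨δ, hδ, hcont⟩ := Metric.continuousAt_iff.1 (hgs s).continuousAt ε hε
    obtain ⟨n', hn'⟩ := ha.exists_dist_lt y (lt_min hδ (by linarith : (0:ℝ) < r - dist (a n) y))
    have hmem : dist (a n') (a n) < r := by
      have h1 : dist (a n') y < r - dist (a n) y :=
        lt_of_lt_of_le (by rwa [dist_comm] at hn') (min_le_right _ _)
      calc dist (a n') (a n) ≤ dist (a n') y + dist y (a n) := dist_triangle _ _ _
        _ < (r - dist (a n) y) + dist (a n) y := by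
            rw [dist_comm y (a n)]; linarith
        _ = r := by ring
    have h2 : dist (g s (a n')) (g s y) < ε :=
      hcont (lt_of_lt_of_le (by rwa [dist_comm] at hn') (min_le_left _ _))
    rw [Real.dist_eq, abs_lt] at h2
    have h3 : (⨅ k : {k : ℕ // dist (a k) (a n) < r}, g s (a k.1)) ≤ g s (a n') :=
      ciInf_le (⟨g s y, by rintro _ ⟨k, rfl⟩; exact hy (a k.1)⟩ :
        BddBelow (Set.range fun k : {k : ℕ // dist (a k) (a n) < r} => g s (a k.1))) ⟨n', hmem⟩
    have h4 : g s y ≤ m s := by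
      obtain ⟨y0, hy0, hmy0⟩ := hmattain s
      rw [hmy0]; exact hy y0
    linarith
  -- (B) Q implies existence of a minimizer within distance r
  have hQB : ∀ (s : ℝ) (n : ℕ) (r : ℝ), 0 < r → Q s n r →
      ∃ y : U, g s y = m s ∧ dist (a n) y ≤ r := by
    intro s n r hr hq
    haveI : Nonempty {k : ℕ // dist (a k) (a n) < r} := ⟨⟨n, by simpa [dist_self] using hr⟩⟩
    have hseq : ∀ j : ℕ, ∃ k : {k : ℕ // dist (a k) (a n) < r},
        g s (a k.1) < m s + 1 / (j + 1) := by
      intro j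
      have : (⨅ k : {k : ℕ // dist (a k) (a n) < r}, g s (a k.1)) < m s + 1 / (j + 1) :=
        lt_of_le_of_lt hq (by positivity |> fun h => lt_add_of_pos_right _ h)
      exact exists_lt_of_ciInf_lt this
    choose k hk using hseq
    have hp : ∀ j, a (k j).1 ∈ Metric.closedBall (a n) r := by
      intro j
      rw [Metric.mem_closedBall]
      exact le_of_lt (k j).2
    obtain ⟨y, hymem, φ, hφmono, hφtend⟩ :=
      (isCompact_closedBall (a n) r).tendsto_subseq hp
    have htend1 : Tendsto (fun j => g s (a (k (φ j)).1)) atTop (nhds (g s y)) :=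
      ((hgs s).continuousAt.tendsto).comp hφtend
    have htend2 : Tendsto (fun j => g s (a (k (φ j)).1)) atTop (nhds (m s)) := by
      refine tendsto_of_tendsto_of_tendsto_of_le_of_le (g := fun _ : ℕ => m s)
        (h := fun j : ℕ => m s + 1 / (j + 1 : ℝ))
        (tendsto_const_nhds) ?_ (fun j => hmlb s _) (fun j => ?_)
      · have : Tendsto (fun j : ℕ => m s + 1 / (j + 1 : ℝ)) atTop (nhds (m s + 0)) :=
          tendsto_const_nhds.add tendsto_one_div_add_atTop_nhds_zero_nat
        simpa using this
      · have h1 : g s (a (k (φ j)).1) < m s + 1 / (φ j + 1 : ℝ) := hk (φ j)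
        have h2 : (1 : ℝ) / (φ j + 1) ≤ 1 / (j + 1) := by
          apply one_div_le_one_div_of_le (by positivity)
          have hj : j ≤ φ j := hφmono.le_apply
          have hj' : (j:ℝ) ≤ (φ j : ℝ) := by exact_mod_cast hj
          linarith
        linarith
    refine ⟨y, tendsto_nhds_unique htend1 htend2, ?_⟩
    rw [dist_comm]
    exact hymem
  -- base and step existence for the recursion
  have ex0 : ∀ s : ℝ, ∃ n : ℕ, Q s n ((1/2 : ℝ)^0) := by
    intro s
    obtain ⟨y, hy, hmy⟩ := hmattain s
    obtain ⟨n, hn⟩ := ha.exists_dist_lt y (by norm_num : (0:ℝ) < (1/2:ℝ)^0)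
    exact ⟨n, hQA s n _ y hy (by rwa [dist_comm] at hn)⟩
  have exS : ∀ (j : ℕ) (c : ℝ → ℕ), (∀ s, Q s (c s) ((1/2 : ℝ)^j)) → ∀ s : ℝ,
      ∃ n : ℕ, dist (a n) (a (c s)) < (1/2 : ℝ)^j + (1/2 : ℝ)^(j+1) ∧
        Q s n ((1/2 : ℝ)^(j+1)) := by
    intro j c hc s
    obtain ⟨y, hy, hdy⟩ := hQB s (c s) ((1/2:ℝ)^j) (by positivity) (hc s)
    have hymin : ∀ b, g s y ≤ g s b := fun b => hy ▸ hmlb s b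
    obtain ⟨n, hn⟩ := ha.exists_dist_lt y (by positivity : (0:ℝ) < (1/2:ℝ)^(j+1))
    refine ⟨n, ?_, hQA s n _ y hymin (by rwa [dist_comm] at hn)⟩
    calc dist (a n) (a (c s)) ≤ dist (a n) y + dist y (a (c s)) := dist_triangle _ _ _
      _ < (1/2:ℝ)^(j+1) + (1/2:ℝ)^j := by
          rw [dist_comm y (a (c s))]
          have := (by rwa [dist_comm] at hn : dist (a n) y < (1/2:ℝ)^(j+1))
          linarith [hdy, this]
      _ = (1/2:ℝ)^j + (1/2:ℝ)^(j+1) := by ring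
  -- measurability of the recursive choices
  have meas0 : Measurable (fun s => Nat.find (ex0 s)) :=
    measurable_find ex0 (fun n => hQmeas n _)
  have measS : ∀ (j : ℕ) (c : ℝ → ℕ) (hmc : Measurable c)
      (hc : ∀ s, Q s (c s) ((1/2 : ℝ)^j)),
      Measurable (fun s => Nat.find (exS j c hc s)) := by
    intro j c hmc hc
    apply measurable_find
    intro n
    have : {s | dist (a n) (a (c s)) < (1/2 : ℝ)^j + (1/2 : ℝ)^(j+1) ∧
        Q s n ((1/2 : ℝ)^(j+1))}
        = (c ⁻¹' {i | dist (a n) (a i) < (1/2 : ℝ)^j + (1/2 : ℝ)^(j+1)})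
          ∩ {s | Q s n ((1/2 : ℝ)^(j+1))} := rfl
    rw [this]
    exact (hmc (by trivial)).inter (hQmeas n _)
  -- the recursive sequence of approximations
  let seqP : ∀ j : ℕ, Σ' c : ℝ → ℕ, Measurable c ∧ ∀ s, Q s (c s) ((1/2 : ℝ)^j) :=
    fun j => Nat.rec
      ⟨fun s => Nat.find (ex0 s), meas0, fun s => Nat.find_spec (ex0 s)⟩
      (fun j prev => ⟨fun s => Nat.find (exS j prev.1 prev.2.2 s),
        measS j prev.1 prev.2.1 prev.2.2,
        fun s => (Nat.find_spec (exS j prev.1 prev.2.2 s)).2⟩) j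
  set c : ℕ → ℝ → U := fun j s => a ((seqP j).1 s) with hc
  have hlink : ∀ (j : ℕ) (s : ℝ),
      dist (c (j+1) s) (c j s) < (1/2 : ℝ)^j + (1/2 : ℝ)^(j+1) :=
    fun j s => (Nat.find_spec (exS j (seqP j).1 (seqP j).2.2 s)).1
  have hcmeas : ∀ j, Measurable (c j) :=
    fun j => measurable_from_top.comp (seqP j).2.1
  have hcQ : ∀ (j : ℕ) (s : ℝ), Q s ((seqP j).1 s) ((1/2 : ℝ)^j) :=
    fun j s => (seqP j).2.2 s
  -- Cauchy and limit
  have hcauchy : ∀ s, CauchySeq (fun j => c j s) := by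
    intro s
    apply cauchySeq_of_le_geometric (1/2 : ℝ) 3 (by norm_num)
    intro j
    rw [dist_comm]
    have := hlink j s
    have h2 : (1/2:ℝ)^(j+1) ≤ (1/2:ℝ)^j := by
      apply pow_le_pow_of_le_one <;> norm_num
    calc dist (c (j+1) s) (c j s) ≤ (1/2:ℝ)^j + (1/2:ℝ)^(j+1) := le_of_lt this
      _ ≤ 3 * (1/2:ℝ)^j := by nlinarith [pow_pos (by norm_num : (0:ℝ) < 1/2) j]
  choose ulim hulim using fun s => cauchySeq_tendsto_of_complete (hcauchy s)
  have humeas : Measurable ulim :=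
    measurable_of_tendsto_metrizable (fun j => hcmeas j) (tendsto_pi_nhds.2 hulim)
  refine ⟨ulim, humeas, fun s => ?_⟩
  -- value at the limit
  choose y hy1 hy2 using fun j => hQB s ((seqP j).1 s) ((1/2:ℝ)^j) (by positivity) (hcQ j s)
  have hy2' : ∀ j, dist (c j s) (y j) ≤ (1/2:ℝ)^j := fun j => hy2 j
  have hhalf : Tendsto (fun j : ℕ => ((1:ℝ)/2)^j) atTop (nhds 0) :=
    tendsto_pow_atTop_nhds_zero_of_lt_one (by norm_num) (by norm_num)
  have hdistc : Tendsto (fun j => dist (c j s) (ulim s)) atTop (nhds 0) :=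
    tendsto_iff_dist_tendsto_zero.1 (hulim s)
  have htendy : Tendsto y atTop (nhds (ulim s)) := by
    rw [tendsto_iff_dist_tendsto_zero]
    apply squeeze_zero (fun j => dist_nonneg)
      (fun j => ?_) (g := fun j => (1/2:ℝ)^j + dist (c j s) (ulim s))
    · simpa using hhalf.add hdistc
    · calc dist (y j) (ulim s) ≤ dist (y j) (c j s) + dist (c j s) (ulim s) :=
            dist_triangle _ _ _
        _ ≤ (1/2:ℝ)^j + dist (c j s) (ulim s) := by
            rw [dist_comm]; exact add_le_add_left (hy2' j) _
  have h1 : Tendsto (fun j => g s (y j)) atTop (nhds (g s (ulim s))) :=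
    ((hgs s).continuousAt.tendsto).comp htendy
  have h2 : Tendsto (fun j => g s (y j)) atTop (nhds (m s)) := by
    have : (fun j => g s (y j)) = fun _ => m s := funext fun j => hy1 j
    rw [this]; exact tendsto_const_nhds
  rw [hinfU s]
  exact tendsto_nhds_unique h1 h2


theorem inf_control_backward_ode (t T : ℝ) (htT : t ≤ T)
    {U : Type*} [MetricSpace U] [CompactSpace U] [Nonempty U]
    [MeasurableSpace U] [BorelSpace U]
    (F : ℝ → ℝ → U → ℝ)
    (hFcont : Continuous fun p : ℝ × ℝ × U => F p.1 p.2.1 p.2.2)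
    (hFLip : ∃ L : ℝ, ∀ (s : ℝ) (a : U), ∀ y y' : ℝ,
      |F s y a - F s y' a| ≤ L * |y - y'|)
    (Y0 : ℝ → ℝ)
    (hY0 : ∀ s ∈ Set.Icc t T, HasDerivAt Y0 (-(⨅ a : U, F s (Y0 s) a)) s)
    (hY0T : Y0 T = 0) :
    IsGLB {x : ℝ | ∃ u : ℝ → U, Measurable u ∧ ∃ Y : ℝ → ℝ,
        (∀ s ∈ Set.Icc t T, HasDerivAt Y (-(F s (Y s) (u s))) s) ∧
        Y T = 0 ∧ x = Y t}
      (Y0 t) := by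
  classical
  obtain ⟨L, hLip⟩ := hFLip
  -- clamp map and the clamped trajectory
  set cl : ℝ → ℝ := fun s => max t (min s T) with hcl
  have hclmem : ∀ s, cl s ∈ Icc t T := fun s =>
    ⟨le_max_left _ _, max_le (htT) (min_le_right _ _)⟩
  have hclid : ∀ s ∈ Icc t T, cl s = s := by
    intro s hs
    simp only [hcl]
    rw [min_eq_left hs.2, max_eq_right hs.1]
  have hclcont : Continuous cl := continuous_const.max (continuous_id.min continuous_const)
  set Z : ℝ → ℝ := fun s => Y0 (cl s) with hZ
  have hY0cont : ∀ s ∈ Icc t T, ContinuousAt Y0 s := fun s hs => (hY0 s hs).continuousAt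
  have hZcont : Continuous Z := by
    rw [continuous_iff_continuousAt]
    intro s
    exact (hY0cont (cl s) (hclmem s)).comp hclcont.continuousAt
  have hZeq : ∀ s ∈ Icc t T, Z s = Y0 s := fun s hs => by rw [hZ]; simp [hclid s hs]
  -- select measurable argmin control along the clamped trajectory
  set g : ℝ → U → ℝ := fun s b => F s (Z s) b with hgdef
  have hgcont : Continuous fun p : ℝ × U => g p.1 p.2 :=
    hFcont.comp (continuous_fst.prodMk
      ((hZcont.comp continuous_fst).prodMk continuous_snd))
  obtain ⟨u, humeas, husel⟩ := aux_sel g hgcont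
  have hueq : ∀ s ∈ Icc t T, F s (Y0 s) (u s) = ⨅ a : U, F s (Y0 s) a := by
    intro s hs
    have h1 := husel s
    simp only [hgdef] at h1
    rw [hZeq s hs] at h1
    exact h1
  -- membership of Y0 t in the set
  have hmem : Y0 t ∈ {x : ℝ | ∃ u : ℝ → U, Measurable u ∧ ∃ Y : ℝ → ℝ,
      (∀ s ∈ Set.Icc t T, HasDerivAt Y (-(F s (Y s) (u s))) s) ∧
      Y T = 0 ∧ x = Y t} := by
    refine ⟨u, humeas, Y0, fun s hs => ?_, hY0T, rfl⟩
    rw [hueq s hs]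
    exact hY0 s hs
  -- lower bound property
  have hL0 : 0 ≤ L := by
    have := hLip 0 (Classical.arbitrary U) 0 1
    simp at this
    linarith [abs_nonneg (F 0 0 (Classical.arbitrary U) - F 0 1 (Classical.arbitrary U)), this]
  have hbddF : ∀ (s : ℝ) (y : ℝ), BddBelow (Set.range fun a : U => F s y a) := by
    intro s y
    have hc : Continuous fun a : U => F s y a :=
      hFcont.comp (continuous_const.prodMk (continuous_const.prodMk continuous_id))
    obtain ⟨z, -, hz⟩ := isCompact_univ.exists_isMinOn univ_nonempty hc.continuousOn
    exact ⟨F s y z, by rintro _ ⟨b, rfl⟩; exact hz (mem_univ b)⟩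
  have hlb : ∀ x ∈ {x : ℝ | ∃ u : ℝ → U, Measurable u ∧ ∃ Y : ℝ → ℝ,
      (∀ s ∈ Set.Icc t T, HasDerivAt Y (-(F s (Y s) (u s))) s) ∧
      Y T = 0 ∧ x = Y t}, Y0 t ≤ x := by
    rintro x ⟨u', -, Y, hY, hYT, rfl⟩
    have key : 0 ≤ Y t - Y0 t := by
      apply aux_comp t T htT L (fun s => Y s - Y0 s)
        (fun s => -(F s (Y s) (u' s)) + (⨅ a : U, F s (Y0 s) a))
      · intro s hs
        show HasDerivAt (fun s => Y s - Y0 s) (-(F s (Y s) (u' s)) + (⨅ a : U, F s (Y0 s) a)) s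
        exact ((hY s hs).sub (hY0 s hs)).congr_deriv (by ring)
      · intro s hs
        have h1 : (⨅ a : U, F s (Y0 s) a) ≤ F s (Y0 s) (u' s) :=
          ciInf_le (hbddF s (Y0 s)) (u' s)
        have h2 : F s (Y0 s) (u' s) - F s (Y s) (u' s) ≤ L * |Y s - Y0 s| := by
          have := hLip s (u' s) (Y0 s) (Y s)
          rw [abs_sub_comm (Y0 s) (Y s)] at this
          exact le_trans (le_abs_self _) this
        linarith
      · simp [hYT, hY0T]
    linarith
  exact ⟨hlb, fun c hc => hc hmem⟩
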